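/- The Maclaurin-type inequality σ_k(λ)·σ_1(λ) ≥ ((n+1)(k+1)/(n+1−k))·σ_{k+1}(λ) holds for all λ in the closed Newton cone Γ̄_k^+ ⊂ ℝ^{n+1}, and equality for λ in the open cone Γ_k^+ forces λ to be a multiple of (1,1,…,1). -/

import Mathlib

open Finset

/-- The k-th elementary symmetric polynomial of `x ∈ ℝ^m`. -/
def esym {m : ℕ} (k : ℕ) (x : Fin m → ℝ) : ℝ :=
  ∑ s ∈ Finset.univ.powersetCard k, ∏ i ∈ s, x i

lemma esym_eq_esymm {m : ℕ} (k : ℕ) (x : Fin m → ℝ) :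
    esym k x = (Finset.univ.val.map x).esymm k := by
  rw [Finset.esymm_map_val]; rfl

lemma esym_zero {m : ℕ} (x : Fin m → ℝ) : esym 0 x = 1 := by
  simp [esym]

lemma esym_one {m : ℕ} (x : Fin m → ℝ) : esym 1 x = ∑ i, x i := by
  simp [esym, Finset.powersetCard_one, Finset.sum_map]

lemma esym_self {m : ℕ} (x : Fin m → ℝ) : esym m x = ∏ i, x i := by
  have h : Finset.powersetCard m (Finset.univ : Finset (Fin m)) = {Finset.univ} := by
    simpa using Finset.powersetCard_self (Finset.univ : Finset (Fin m))
  rw [esym, h]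
  simp

-- multiset: esymm cons
lemma Multiset.esymm_cons (a : ℝ) (s : Multiset ℝ) (n : ℕ) :
    (a ::ₘ s).esymm (n+1) = s.esymm (n+1) + a * s.esymm n := by
  rw [Multiset.esymm, Multiset.powersetCard_cons, Multiset.map_add, Multiset.sum_add,
    Multiset.map_map]
  congr 1
  rw [Multiset.esymm, ← Multiset.sum_map_mul_left]
  congr 1
  apply Multiset.map_congr rfl
  intro t _
  simp [Multiset.prod_cons]

lemma Multiset.esymm_one' (s : Multiset ℝ) : s.esymm 1 = s.sum := by
  induction s using Multiset.induction with
  | empty => simp [Multiset.esymm, Multiset.powersetCard_eq_empty 1 (s := (0 : Multiset ℝ)) (by simp)]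
  | cons a s ih =>
      rw [show (1:ℕ) = 0 + 1 from rfl, Multiset.esymm_cons, ih]
      simp [Multiset.esymm]
      ring

lemma Multiset.esymm_two_cons (a : ℝ) (s : Multiset ℝ) :
    (a ::ₘ s).esymm 2 = s.esymm 2 + a * s.sum := by
  have := Multiset.esymm_cons a s 1
  simpa [Multiset.esymm_one'] using this

lemma Multiset.sq_sum (s : Multiset ℝ) :
    s.sum ^ 2 = (s.map (fun a => a^2)).sum + 2 * s.esymm 2 := by
  induction s using Multiset.induction with
  | empty => simp [Multiset.esymm, Multiset.powersetCard_eq_empty 2 (s := (0 : Multiset ℝ)) (by simp)]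
  | cons a s ih =>
      rw [Multiset.sum_cons, Multiset.esymm_two_cons, Multiset.map_cons, Multiset.sum_cons]
      nlinarith [ih]

-- Fin version of the square-sum identity
lemma sq_sum_fin {m : ℕ} (x : Fin m → ℝ) :
    (∑ i, x i) ^ 2 = (∑ i, (x i)^2) + 2 * esym 2 x := by
  have h := Multiset.sq_sum (Finset.univ.val.map x)
  have h1 : (Finset.univ.val.map x).sum = ∑ i, x i := rfl
  have h2 : (Finset.univ.val.map x).map (fun a => a^2)
      = Finset.univ.val.map (fun i => x i ^ 2) := by
    rw [Multiset.map_map]; rfl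
  have h3 : (Finset.univ.val.map (fun i => x i ^ 2)).sum = ∑ i, x i ^ 2 := rfl
  rw [esym_eq_esymm, ← h1, ← h3, ← h2]
  exact h

-- double-sum variance identity
lemma variance_identity {m : ℕ} (x : Fin m → ℝ) :
    ∑ i, ∑ j, (x i - x j)^2 = 2 * m * (∑ i, (x i)^2) - 2 * (∑ i, x i)^2 := by
  have expand : ∀ i j : Fin m, (x i - x j)^2 = (x i)^2 - 2 * (x i * x j) + (x j)^2 := by
    intros; ring
  simp_rw [expand, Finset.sum_add_distrib, Finset.sum_sub_distrib, Finset.sum_const,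
    Finset.card_univ, Fintype.card_fin, ← Finset.mul_sum, ← Finset.sum_mul, nsmul_eq_mul]
  simp_rw [← Finset.mul_sum]
  ring

-- base Newton: 2 d e2 ≤ (d-1) e1²
lemma newton_base {d : ℕ} (z : Fin d → ℝ) :
    2 * d * esym 2 z ≤ ((d:ℝ) - 1) * (esym 1 z)^2 := by
  have h1 := sq_sum_fin z
  have h2 := variance_identity z
  have h3 : (0:ℝ) ≤ ∑ i, ∑ j, (z i - z j)^2 :=
    Finset.sum_nonneg fun i _ => Finset.sum_nonneg fun j _ => sq_nonneg _
  rw [esym_one]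
  nlinarith

-- equality case of base Newton
lemma newton_base_eq {d : ℕ} (z : Fin d → ℝ)
    (h : 2 * d * esym 2 z = ((d:ℝ) - 1) * (esym 1 z)^2) :
    ∀ i j : Fin d, z i = z j := by
  have h1 := sq_sum_fin z
  have h2 := variance_identity z
  have h4 : ∑ i, ∑ j, (z i - z j)^2 = 0 := by rw [esym_one] at h; nlinarith
  intro i j
  have h5 : ∀ i ∈ Finset.univ, (0:ℝ) ≤ ∑ j, (z i - z j)^2 :=
    fun i _ => Finset.sum_nonneg fun j _ => sq_nonneg _
  have h6 := (Finset.sum_eq_zero_iff_of_nonneg h5).mp h4 i (Finset.mem_univ i)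
  have h7 := (Finset.sum_eq_zero_iff_of_nonneg
    (fun j _ => sq_nonneg (z i - z j))).mp h6 j (Finset.mem_univ j)
  have := sq_eq_zero_iff.mp h7
  linarith

-- complement reindexing
lemma esym_compl {d : ℕ} (y : Fin d → ℝ) (i : ℕ) (hi : i ≤ d) :
    esym (d - i) y = ∑ s ∈ Finset.univ.powersetCard i, ∏ j ∈ sᶜ, y j := by
  rw [esym]
  apply Finset.sum_nbij' (fun s => sᶜ) (fun s => sᶜ)
  · intro s hs
    rw [Finset.mem_powersetCard_univ] at hs ⊢
    rw [Finset.card_compl, hs, Fintype.card_fin]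
    omega
  · intro s hs
    rw [Finset.mem_powersetCard_univ] at hs ⊢
    rw [Finset.card_compl, hs, Fintype.card_fin]
  · intro s _; simp
  · intro s _; simp
  · intro s _; rw [compl_compl]

lemma esym_reverse {d : ℕ} (y : Fin d → ℝ) (hy : ∀ i, y i ≠ 0) (i : ℕ) (hi : i ≤ d) :
    esym (d - i) y = (∏ j, y j) * esym i (fun j => (y j)⁻¹) := by
  rw [esym_compl y i hi, esym, Finset.mul_sum]
  apply Finset.sum_congr rfl
  intro s _
  have hprod : ∏ j ∈ s, y j ≠ 0 := Finset.prod_ne_zero_iff.mpr fun j _ => hy j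
  have hsplit : (∏ j ∈ s, y j) * ∏ j ∈ sᶜ, y j = ∏ j, y j := Finset.prod_mul_prod_compl s y
  rw [Finset.prod_inv_distrib]
  field_simp
  linarith [hsplit]

lemma newton_top {d : ℕ} (hd : 2 ≤ d) (y : Fin d → ℝ) :
    (d:ℝ)^2 * (esym (d-2) y * esym d y) ≤ ((d:ℝ) * ((d:ℝ) - 1) / 2) * (esym (d-1) y)^2 := by
  by_cases hzero : ∃ i, y i = 0
  · obtain ⟨i, hi⟩ := hzero
    have h0 : esym d y = 0 := by
      rw [esym_self]; exact Finset.prod_eq_zero (Finset.mem_univ i) hi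
    rw [h0]
    have : (0:ℝ) ≤ ((d:ℝ) * ((d:ℝ) - 1) / 2) * (esym (d-1) y)^2 := by
      have h1 : (1:ℝ) ≤ (d:ℝ) := by exact_mod_cast Nat.one_le_of_lt hd
      have h2 : (0:ℝ) ≤ (d:ℝ) * ((d:ℝ) - 1) / 2 := by nlinarith
      exact mul_nonneg h2 (sq_nonneg _)
    linarith
  · push_neg at hzero
    set z : Fin d → ℝ := fun j => (y j)⁻¹ with hz
    have k2 : esym (d - 2) y = (∏ j, y j) * esym 2 z := esym_reverse y hzero 2 hd
    have k1 : esym (d - 1) y = (∏ j, y j) * esym 1 z :=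
      esym_reverse y hzero 1 (by omega)
    have kd : esym d y = ∏ j, y j := esym_self y
    have base := newton_base z
    have hd' : (2:ℝ) ≤ (d:ℝ) := by exact_mod_cast hd
    rw [k2, k1, kd]
    have hsq : (0:ℝ) ≤ (∏ j, y j)^2 := sq_nonneg _
    nlinarith [mul_le_mul_of_nonneg_left base (mul_nonneg (by linarith : (0:ℝ) ≤ (d:ℝ)/2) hsq)]

open Polynomial in
lemma exists_fin_enum {d : ℕ} (s : Multiset ℝ) (h : Multiset.card s = d) :
    ∃ y : Fin d → ℝ, Finset.univ.val.map y = s := by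
  have hl : s.toList.length = d := by rw [Multiset.length_toList, h]
  refine ⟨fun i => s.toList.get (Fin.cast hl.symm i), ?_⟩
  have h2 : Finset.univ.val.map (fun i : Fin d => s.toList.get (Fin.cast hl.symm i))
      = ↑(List.ofFn fun i : Fin d => s.toList.get (Fin.cast hl.symm i)) := by simp
  rw [h2]
  conv_rhs => rw [← Multiset.coe_toList s]
  congr 1
  apply List.ext_get
  · simp [hl]
  · intro n h1 h2
    simp [List.get_ofFn]

open Polynomial in
lemma derivative_reduction {m : ℕ} (y : Fin (m+1) → ℝ) :
    ∃ z : Fin m → ℝ, ∀ i : ℕ, i ≤ m →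
      ((m:ℝ)+1) * esym i z = (((m+1-i : ℕ)):ℝ) * esym i y := by
  set s : Multiset ℝ := Finset.univ.val.map y with hs
  have hcards : Multiset.card s = m + 1 := by simp [hs]
  set Q : ℝ[X] := (s.map fun a => X - C a).prod with hQ
  have hQm : Q.Monic := monic_multiset_prod_of_monic _ _ fun a _ => monic_X_sub_C _
  have hdeg : Q.natDegree = m + 1 := by
    rw [hQ, natDegree_multiset_prod_X_sub_C_eq_card, hcards]
  have hroots : Q.roots = s := roots_multiset_prod_X_sub_C s
  have hc1 : m ≤ Multiset.card (derivative Q).roots := by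
    have h1 := Polynomial.card_roots_le_derivative Q
    rw [hroots, hcards] at h1
    omega
  have hdeg' : (derivative Q).natDegree ≤ m := by
    have := natDegree_derivative_le Q
    omega
  have hcard' : Multiset.card (derivative Q).roots ≤ (derivative Q).natDegree :=
    Polynomial.card_roots' _
  have hdegQ' : (derivative Q).natDegree = m := by omega
  have hcardQ' : Multiset.card (derivative Q).roots = m := by omega
  have hlead : (derivative Q).leadingCoeff = (m:ℝ) + 1 := by
    rw [Polynomial.leadingCoeff, hdegQ', Polynomial.coeff_derivative]
    have : Q.coeff (m + 1) = 1 := by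
      have := hQm.coeff_natDegree
      rwa [hdeg] at this
    rw [this, one_mul]
  obtain ⟨z, hz⟩ := exists_fin_enum (derivative Q).roots hcardQ'
  refine ⟨z, fun i hi => ?_⟩
  have hA := Polynomial.coeff_eq_esymm_roots_of_card
    (hcardQ'.trans hdegQ'.symm) (k := m - i) (by omega)
  rw [hdegQ', hlead, show m - (m - i) = i by omega] at hA
  have hB := Multiset.prod_X_sub_C_coeff s (k := m + 1 - i) (by omega)
  rw [hcards, show m + 1 - (m + 1 - i) = i by omega] at hB
  have hC := Polynomial.coeff_derivative Q (m - i)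
  rw [show m - i + 1 = m + 1 - i by omega] at hC
  rw [← hQ] at hB
  rw [hA, hB] at hC
  -- hC : ((m:ℝ)+1) * (-1)^i * esymm _ i = (-1)^i * esymm s i * ((m-i:ℕ) + 1)
  have hzesym : (derivative Q).roots.esymm i = esym i z := by
    rw [esym_eq_esymm, hz]
  have hyesym : s.esymm i = esym i y := by rw [esym_eq_esymm, hs]
  rw [hzesym, hyesym] at hC
  have hsign : ((-1:ℝ))^i ≠ 0 := by positivity
  have hcast : (((m+1-i : ℕ)):ℝ) = ((m - i : ℕ):ℝ) + 1 := by
    have : m + 1 - i = (m - i) + 1 := by omega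
    rw [this]; push_cast; ring
  rw [hcast]
  push_cast [Nat.cast_sub hi] at hC ⊢
  rcases neg_one_pow_eq_or ℝ i with h1 | h1 <;> rw [h1] at hC <;> linarith

lemma p_transfer {m i : ℕ} (hi : i ≤ m) (y : Fin (m+1) → ℝ) (z : Fin m → ℝ)
    (h : ((m:ℝ)+1) * esym i z = (((m+1-i : ℕ)):ℝ) * esym i y) :
    esym i y / (((m+1).choose i : ℝ)) = esym i z / ((m.choose i : ℝ)) := by
  have c1 : (0:ℝ) < (m.choose i : ℝ) := by
    exact_mod_cast Nat.choose_pos hi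
  have c2 : (0:ℝ) < ((m+1).choose i : ℝ) := by
    exact_mod_cast Nat.choose_pos (by omega : i ≤ m + 1)
  have key : (m.choose i : ℝ) * ((m:ℝ)+1) = (((m+1).choose i : ℝ)) * (((m+1-i:ℕ)):ℝ) := by
    exact_mod_cast congrArg (Nat.cast (R := ℝ)) (Nat.choose_mul_succ_eq m i)
  rw [div_eq_div_iff c2.ne' c1.ne']
  have hmul : ((m:ℝ)+1) * (esym i y * (m.choose i : ℝ))
      = ((m:ℝ)+1) * (esym i z * (((m+1).choose i : ℝ))) := by
    linear_combination esym i y * key - (((m+1).choose i : ℝ)) * h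
  exact mul_left_cancel₀ (by positivity) hmul

lemma two_mul_choose_two (d : ℕ) : 2 * d.choose 2 = d * (d - 1) := by
  induction d with
  | zero => simp
  | succ n ih =>
      rw [Nat.choose_succ_succ, Nat.choose_one_right, Nat.mul_add, ih, Nat.succ_sub_one]
      cases n with
      | zero => simp
      | succ k => rw [Nat.succ_sub_one]; ring

lemma newton_general (d j : ℕ) (h : j + 2 ≤ d) (y : Fin d → ℝ) :
    (esym j y / (d.choose j : ℝ)) * (esym (j+2) y / (d.choose (j+2) : ℝ))
      ≤ (esym (j+1) y / (d.choose (j+1) : ℝ))^2 := by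
  induction d generalizing j with
  | zero => omega
  | succ m IH =>
    rcases eq_or_lt_of_le h with heq | hlt
    · -- top case : j + 2 = m + 1
      have hj : j = m - 1 := by omega
      have hm1 : 1 ≤ m := by omega
      have htop := newton_top (d := m+1) (by omega) y
      have e0 : m + 1 - 2 = j := by omega
      have e1 : m + 1 - 1 = j + 1 := by omega
      have e2 : m + 1 = j + 2 := by omega
      rw [e0, e1] at htop
      have hc2 : ((m+1).choose (j+2) : ℝ) = 1 := by
        rw [← e2, Nat.choose_self]; norm_num
      have hc1 : ((m+1).choose (j+1) : ℝ) = (m:ℝ) + 1 := by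
        have : j + 1 = m := by omega
        rw [this, Nat.choose_succ_self_right]; push_cast; ring
      have hc0 : ((m+1).choose j : ℝ) = ((m:ℝ)+1) * m / 2 := by
        have hsymm : (m+1).choose j = (m+1).choose 2 := by
          rw [show j = m + 1 - 2 by omega]
          exact Nat.choose_symm (by omega)
        have h2 := two_mul_choose_two (m+1)
        rw [Nat.succ_sub_one] at h2
        rw [hsymm]
        have : (2:ℝ) * ((m+1).choose 2 : ℝ) = ((m:ℝ)+1) * m := by
          exact_mod_cast congrArg (Nat.cast (R := ℝ)) h2
        linarith
      rw [hc0, hc1, hc2]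
      have hm1' : (1:ℝ) ≤ (m:ℝ) := by exact_mod_cast hm1
      rw [div_one, div_mul_eq_mul_div, div_pow, heq,
        div_le_div_iff₀ (by nlinarith) (by nlinarith)]
      push_cast at htop
      nlinarith [htop]
    · -- reduction case : j + 2 ≤ m
      obtain ⟨z, hz⟩ := derivative_reduction y
      have t0 := p_transfer (by omega) y z (hz j (by omega))
      have t1 := p_transfer (by omega) y z (hz (j+1) (by omega))
      have t2 := p_transfer (by omega) y z (hz (j+2) (by omega))
      rw [t0, t1, t2]
      exact IH j (by omega) z

lemma chain_lemma {k m : ℕ} (hk : 1 ≤ k) (hkm : k + 1 ≤ m) (P : ℕ → ℝ)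
    (hpos : ∀ j, 1 ≤ j → j ≤ k → 0 < P j)
    (hnewton : ∀ j, j + 2 ≤ m → P j * P (j+2) ≤ P (j+1)^2) :
    ∀ j, 1 ≤ j → j ≤ k → P (j+1) * P 1 ≤ P j * P 2 := by
  intro j hj1
  induction j, hj1 using Nat.le_induction with
  | base => intro _; exact le_of_eq (by ring)
  | succ j hj ih =>
      intro hjk
      have hP1 : 0 < P 1 := hpos 1 le_rfl hk
      have hP2 : 0 < P 2 := hpos 2 (by omega) (by omega)
      have hPj : 0 < P j := hpos j hj (by omega)
      have hPj1 : 0 < P (j+1) := hpos (j+1) (by omega) hjk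
      have ihj := ih (by omega)
      have hN := hnewton j (by omega)
      rcases le_or_gt (P (j+2)) 0 with hneg | hpos2
      · have : P (j+2) * P 1 ≤ 0 := mul_nonpos_of_nonpos_of_nonneg hneg hP1.le
        nlinarith
      · nlinarith [mul_le_mul_of_nonneg_left ihj hPj1.le,
          mul_le_mul_of_nonneg_right hN hP1.le]

section Strict
variable {m k : ℕ}

lemma choose_cast_pos {a b : ℕ} (h : b ≤ a) : (0:ℝ) < (a.choose b : ℝ) := by
  exact_mod_cast Nat.choose_pos h

lemma strict_P_ineq (hk : 1 ≤ k) (hkm : k + 1 ≤ m) (y : Fin m → ℝ)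
    (hpos : ∀ j, 1 ≤ j → j ≤ k → 0 < esym j y) :
    esym (k+1) y / ((m.choose (k+1) : ℝ))
      ≤ (esym k y / (m.choose k : ℝ)) * (esym 1 y / (m.choose 1 : ℝ)) := by
  set P : ℕ → ℝ := fun j => esym j y / (m.choose j : ℝ) with hP
  have hposP : ∀ j, 1 ≤ j → j ≤ k → 0 < P j := fun j h1 h2 =>
    div_pos (hpos j h1 h2) (choose_cast_pos (by omega))
  have hN : ∀ j, j + 2 ≤ m → P j * P (j+2) ≤ P (j+1)^2 := fun j hj =>
    newton_general m j hj y
  have hchain := chain_lemma hk hkm P hposP hN k hk le_rfl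
  have hN0 := hN 0 (by omega)
  have hP0 : P 0 = 1 := by
    simp [hP, esym_zero]
  have hP1 : 0 < P 1 := hposP 1 le_rfl hk
  have hPk : 0 < P k := hposP k hk le_rfl
  rw [hP0, one_mul] at hN0
  -- P (k+1) * P 1 ≤ P k * P 2 ≤ P k * P 1 ^ 2
  have h2 : P (k+1) * P 1 ≤ (P k * P 1) * P 1 := by nlinarith
  exact le_of_mul_le_mul_right h2 hP1

lemma strict_P_eq (hk : 1 ≤ k) (hkm : k + 1 ≤ m) (y : Fin m → ℝ)
    (hpos : ∀ j, 1 ≤ j → j ≤ k → 0 < esym j y)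
    (heq : esym (k+1) y / ((m.choose (k+1) : ℝ))
      = (esym k y / (m.choose k : ℝ)) * (esym 1 y / (m.choose 1 : ℝ))) :
    ∀ i j : Fin m, y i = y j := by
  set P : ℕ → ℝ := fun j => esym j y / (m.choose j : ℝ) with hP
  have hposP : ∀ j, 1 ≤ j → j ≤ k → 0 < P j := fun j h1 h2 =>
    div_pos (hpos j h1 h2) (choose_cast_pos (by omega))
  have hN : ∀ j, j + 2 ≤ m → P j * P (j+2) ≤ P (j+1)^2 := fun j hj =>
    newton_general m j hj y
  have hchain := chain_lemma hk hkm P hposP hN k hk le_rfl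
  have hN0 := hN 0 (by omega)
  have hP0 : P 0 = 1 := by simp [hP, esym_zero]
  have hP1 : 0 < P 1 := hposP 1 le_rfl hk
  have hPk : 0 < P k := hposP k hk le_rfl
  rw [hP0, one_mul] at hN0
  -- equality forces P 2 = P 1 ^ 2
  have hP2eq : P 2 = P 1 ^ 2 := by
    have h1 : (P k * P 1) * P 1 ≤ P k * P 2 := by rw [← heq]; exact hchain
    have h2 : P 1 ^ 2 ≤ P 2 := by nlinarith
    linarith
  -- translate to esym form
  have hm2 : 2 ≤ m := by omega
  have hc2 : (2:ℝ) * (m.choose 2 : ℝ) = (m:ℝ) * ((m:ℝ) - 1) := by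
    have h := two_mul_choose_two m
    have h' : 2 * m.choose 2 = m * (m-1) := h
    have : ((2 * m.choose 2 : ℕ) : ℝ) = ((m * (m-1) : ℕ) : ℝ) := by rw [h']
    push_cast [Nat.cast_sub (by omega : 1 ≤ m)] at this
    linarith
  have hc1 : (m.choose 1 : ℝ) = (m:ℝ) := by
    rw [Nat.choose_one_right]
  have hchoose2pos : (0:ℝ) < (m.choose 2 : ℝ) := choose_cast_pos hm2
  have hmpos : (0:ℝ) < (m:ℝ) := by exact_mod_cast (by omega : 0 < m)
  have hfield : esym 2 y * ((m:ℝ)^2) = (esym 1 y)^2 * (m.choose 2 : ℝ) := by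
    have h3 := hP2eq
    simp only [hP, hc1] at h3
    field_simp at h3
    linarith
  have hbase : 2 * (m:ℝ) * esym 2 y = ((m:ℝ) - 1) * (esym 1 y)^2 := by
    have h4 : (m:ℝ) * (2 * (m:ℝ) * esym 2 y) = (m:ℝ) * (((m:ℝ) - 1) * (esym 1 y)^2) := by
      linear_combination 2 * hfield + (esym 1 y)^2 * hc2
    exact mul_left_cancel₀ hmpos.ne' h4
  exact newton_base_eq y hbase
end Strict

lemma card_supersets {m : ℕ} (T : Finset (Fin m)) {j : ℕ} (hT : T.card ≤ j) :
    ((Finset.univ.powersetCard j).filter (fun S => T ⊆ S)).card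
      = (m - T.card).choose (j - T.card) := by
  have hcompl : Tᶜ.card = m - T.card := by
    rw [Finset.card_compl, Fintype.card_fin]
  rw [← hcompl, ← Finset.card_powersetCard]
  apply Finset.card_bij' (fun S _ => S \ T) (fun U _ => U ∪ T)
  · intro S hS
    rw [Finset.mem_filter, Finset.mem_powersetCard_univ] at hS
    rw [Finset.mem_powersetCard]
    constructor
    · intro a ha
      rw [Finset.mem_compl]
      exact (Finset.mem_sdiff.mp ha).2
    · rw [Finset.card_sdiff_of_subset hS.2, hS.1]
  · intro U hU
    rw [Finset.mem_powersetCard] at hU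
    have hdisj : Disjoint U T := Finset.disjoint_left.mpr fun a haU haT =>
      (Finset.mem_compl.mp (hU.1 haU)) haT
    rw [Finset.mem_filter, Finset.mem_powersetCard_univ]
    refine ⟨?_, Finset.subset_union_right⟩
    rw [Finset.card_union_of_disjoint hdisj, hU.2]
    omega
  · intro S hS
    rw [Finset.mem_filter] at hS
    exact Finset.sdiff_union_of_subset hS.2
  · intro U hU
    rw [Finset.mem_powersetCard] at hU
    have hdisj : Disjoint U T := Finset.disjoint_left.mpr fun a haU haT =>
      (Finset.mem_compl.mp (hU.1 haU)) haT
    exact Finset.union_sdiff_cancel_right hdisj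

lemma esym_shift {m : ℕ} (x : Fin m → ℝ) (t : ℝ) (j : ℕ) (hj : j ≤ m) :
    esym j (fun i => x i + t)
      = ∑ i ∈ Finset.range (j+1), ((m - i).choose (j - i) : ℝ) * t^(j-i) * esym i x := by
  have step1 : esym j (fun i => x i + t)
      = ∑ S ∈ Finset.univ.powersetCard j, ∑ T ∈ S.powerset,
          (∏ i ∈ T, x i) * t^(j - T.card) := by
    rw [esym]
    apply Finset.sum_congr rfl
    intro S hS
    rw [Finset.prod_add]
    apply Finset.sum_congr rfl
    intro T hT
    rw [Finset.prod_const]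
    congr 2
    rw [Finset.card_sdiff_of_subset (Finset.mem_powerset.mp hT),
      Finset.mem_powersetCard_univ.mp hS]
  rw [step1]
  rw [Finset.sum_comm' (t' := Finset.univ.powerset)
    (s' := fun T => (Finset.univ.powersetCard j).filter (fun S => T ⊆ S))
    (fun S T => by
      simp only [Finset.mem_powerset, Finset.mem_filter, Finset.mem_powersetCard_univ]
      constructor
      · rintro ⟨h1, h2⟩; exact ⟨⟨h1, h2⟩, Finset.subset_univ T⟩
      · rintro ⟨⟨h1, h2⟩, _⟩; exact ⟨h1, h2⟩)]
  have step2 : ∀ T : Finset (Fin m),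
      ∑ S ∈ (Finset.univ.powersetCard j).filter (fun S => T ⊆ S),
        (∏ i ∈ T, x i) * t^(j - T.card)
      = (((Finset.univ.powersetCard j).filter (fun S => T ⊆ S)).card : ℝ)
          * ((∏ i ∈ T, x i) * t^(j - T.card)) := by
    intro T
    rw [Finset.sum_const, nsmul_eq_mul]
  simp_rw [step2]
  rw [Finset.sum_powerset]
  have hcard : (Finset.univ : Finset (Fin m)).card = m := by simp
  rw [hcard]
  have step3 : ∀ i ∈ Finset.range (m+1),
      ∑ T ∈ Finset.univ.powersetCard i,
        ((((Finset.univ.powersetCard j).filter (fun S => T ⊆ S)).card : ℝ)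
          * ((∏ l ∈ T, x l) * t^(j - T.card)))
      = if i ≤ j then ((m - i).choose (j - i) : ℝ) * t^(j-i) * esym i x else 0 := by
    intro i _
    by_cases hij : i ≤ j
    · rw [if_pos hij, esym, Finset.mul_sum]
      apply Finset.sum_congr rfl
      intro T hT
      have hTc : T.card = i := Finset.mem_powersetCard_univ.mp hT
      rw [card_supersets T (by omega), hTc]
      ring
    · rw [if_neg hij]
      apply Finset.sum_eq_zero
      intro T hT
      have hTc : T.card = i := Finset.mem_powersetCard_univ.mp hT
      have hempty : ((Finset.univ.powersetCard j).filter (fun S => T ⊆ S)) = ∅ := by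
        apply Finset.filter_false_of_mem
        intro S hS
        rw [Finset.mem_powersetCard_univ] at hS
        intro hsub
        have := Finset.card_le_card hsub
        omega
      rw [hempty]
      simp
  rw [Finset.sum_congr rfl step3]
  rw [← Finset.sum_filter]
  congr 1
  ext i
  simp only [Finset.mem_filter, Finset.mem_range]
  omega

lemma esym_shift_pos {m k : ℕ} (x : Fin m → ℝ)
    (hx : ∀ i, 1 ≤ i → i ≤ k → 0 ≤ esym i x) {j : ℕ} (hj1 : 1 ≤ j) (hjk : j ≤ k)
    (hkm : k ≤ m) {t : ℝ} (ht : 0 < t) :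
    0 < esym j (fun i => x i + t) := by
  rw [esym_shift x t j (by omega)]
  apply Finset.sum_pos'
  · intro i hi
    rw [Finset.mem_range] at hi
    have hij : i ≤ j := by omega
    have hchoose : (0:ℝ) ≤ ((m - i).choose (j - i) : ℝ) := by positivity
    have htpow : (0:ℝ) ≤ t^(j-i) := le_of_lt (pow_pos ht _)
    rcases Nat.eq_zero_or_pos i with h0 | hpos
    · subst h0
      rw [esym_zero]
      positivity
    · exact mul_nonneg (mul_nonneg hchoose htpow) (hx i hpos (by omega))
  · refine ⟨0, Finset.mem_range.mpr (by omega), ?_⟩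
    rw [esym_zero, Nat.sub_zero, Nat.sub_zero, mul_one]
    have hcpos : (0:ℝ) < (m.choose j : ℝ) := choose_cast_pos (by omega)
    have := pow_pos ht j
    positivity
  
lemma esym_shift_continuous {m : ℕ} (j : ℕ) (x : Fin m → ℝ) :
    Continuous fun t : ℝ => esym j (fun i => x i + t) := by
  unfold esym
  apply continuous_finset_sum
  intro s _
  apply continuous_finset_prod
  intro i _
  exact continuous_const.add continuous_id

lemma strict_final {m k : ℕ} (hk : 1 ≤ k) (hkm : k + 1 ≤ m) (y : Fin m → ℝ)
    (hpos : ∀ j, 1 ≤ j → j ≤ k → 0 < esym j y) :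
    ((m:ℝ) * ((k:ℝ)+1) / ((m:ℝ) - (k:ℝ))) * esym (k+1) y ≤ esym k y * esym 1 y := by
  have hPineq := strict_P_ineq hk hkm y hpos
  have hA : (0:ℝ) < (m.choose k : ℝ) := choose_cast_pos (by omega)
  have hB : (0:ℝ) < (m.choose (k+1) : ℝ) := choose_cast_pos (by omega)
  have hm : (0:ℝ) < (m:ℝ) := by exact_mod_cast (by omega : 0 < m)
  have hmk : (0:ℝ) < (m:ℝ) - (k:ℝ) := by
    have : (k:ℝ) + 1 ≤ (m:ℝ) := by exact_mod_cast hkm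
    linarith
  have hrel : (m.choose (k+1) : ℝ) * ((k:ℝ)+1) = (m.choose k : ℝ) * ((m:ℝ) - (k:ℝ)) := by
    have h := Nat.choose_succ_right_eq m k
    have h2 : ((m.choose (k+1) * (k+1) : ℕ) : ℝ) = ((m.choose k * (m - k) : ℕ) : ℝ) := by
      rw [h]
    push_cast [Nat.cast_sub (by omega : k ≤ m)] at h2
    linarith
  rw [Nat.choose_one_right] at hPineq
  rw [div_mul_eq_mul_div, div_le_iff₀ hmk]
  rw [div_mul_div_comm, div_le_div_iff₀ hB (by positivity)] at hPineq
  have h1 := mul_le_mul_of_nonneg_right hPineq (show (0:ℝ) ≤ (k:ℝ)+1 by positivity)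
  have h2 : esym k y * esym 1 y * (m.choose (k+1) : ℝ) * ((k:ℝ)+1)
      = esym k y * esym 1 y * ((m.choose k : ℝ) * ((m:ℝ)-(k:ℝ))) := by
    linear_combination esym k y * esym 1 y * hrel
  nlinarith [h1, h2, hA, mul_pos hA hmk]

/-- Maclaurin-type inequality σ_k·σ_1 ≥ ((n+1)(k+1)/(n+1−k))·σ_{k+1} on the
closed cone Γ̄_k^+, with equality in the open cone Γ_k^+ only for multiples of
(1,…,1). -/
theorem maclaurin_type (n k : ℕ) (hk : 1 ≤ k) (hkn : k ≤ n) :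
    (∀ lam : Fin (n+1) → ℝ, (∀ j, 1 ≤ j → j ≤ k → 0 ≤ esym j lam) →
      esym k lam * esym 1 lam
        ≥ (((n : ℝ) + 1) * ((k : ℝ) + 1) / ((n : ℝ) + 1 - k)) * esym (k+1) lam)
    ∧
    (∀ lam : Fin (n+1) → ℝ, (∀ j, 1 ≤ j → j ≤ k → 0 < esym j lam) →
      esym k lam * esym 1 lam
        = (((n : ℝ) + 1) * ((k : ℝ) + 1) / ((n : ℝ) + 1 - k)) * esym (k+1) lam →
      ∃ c : ℝ, ∀ i : Fin (n+1), lam i = c) := by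
  constructor
  · intro lam hlam
    set c : ℝ := ((n : ℝ) + 1) * ((k : ℝ) + 1) / ((n : ℝ) + 1 - k) with hc
    set F : ℝ → ℝ := fun t => esym k (fun i => lam i + t) * esym 1 (fun i => lam i + t)
      - c * esym (k+1) (fun i => lam i + t) with hF
    have key : ∀ t : ℝ, 0 < t → 0 ≤ F t := by
      intro t ht
      have hpos : ∀ j, 1 ≤ j → j ≤ k → 0 < esym j (fun i => lam i + t) :=
        fun j h1 h2 => esym_shift_pos lam hlam h1 h2 (by omega) ht
      have hsf := strict_final (m := n+1) hk (by omega) _ hpos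
      push_cast at hsf
      simp only [hF, hc]
      linarith
    have hcont : Continuous F := by
      exact ((esym_shift_continuous k lam).mul (esym_shift_continuous 1 lam)).sub
        (continuous_const.mul (esym_shift_continuous (k+1) lam))
    have hlim : Filter.Tendsto F (nhdsWithin 0 (Set.Ioi 0)) (nhds (F 0)) :=
      (hcont.tendsto 0).mono_left nhdsWithin_le_nhds
    have hF0 : 0 ≤ F 0 := by
      apply ge_of_tendsto hlim
      filter_upwards [self_mem_nhdsWithin] with t ht
      exact key t ht
    have hlam0 : (fun i => lam i + (0:ℝ)) = lam := by funext i; ring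
    simp only [hF, hlam0] at hF0
    linarith
  · intro lam hpos heq
    have hm : (0:ℝ) < ((n:ℝ) + 1) := by positivity
    have hmk : (0:ℝ) < (n:ℝ) + 1 - (k:ℝ) := by
      have : (k:ℝ) ≤ (n:ℝ) := by exact_mod_cast hkn
      linarith
    have hA : (0:ℝ) < ((n+1).choose k : ℝ) := choose_cast_pos (by omega)
    have hB : (0:ℝ) < ((n+1).choose (k+1) : ℝ) := choose_cast_pos (by omega)
    have hrel : (((n+1).choose (k+1) : ℝ)) * ((k:ℝ)+1)
        = (((n+1).choose k : ℝ)) * ((n:ℝ) + 1 - (k:ℝ)) := by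
      have h := Nat.choose_succ_right_eq (n+1) k
      have h2 : (((n+1).choose (k+1) * (k+1) : ℕ) : ℝ) = (((n+1).choose k * (n+1-k) : ℕ) : ℝ) := by
        rw [h]
      push_cast [Nat.cast_sub (by omega : k ≤ n+1)] at h2
      linarith
    -- convert heq to P-form
    have hPeq : esym (k+1) lam / (((n+1).choose (k+1) : ℝ))
        = (esym k lam / (((n+1).choose k : ℝ))) * (esym 1 lam / (((n+1).choose 1 : ℝ))) := by
      rw [Nat.choose_one_right]
      have hn1 : ((n+1 : ℕ):ℝ) = (n:ℝ) + 1 := by push_cast; ring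
      rw [hn1]
      rw [div_mul_div_comm, div_eq_div_iff hB.ne' (by positivity)]
      -- goal : esym (k+1) lam * (A * (n+1)) = esym k lam * esym 1 lam * B
      have hcross : esym k lam * esym 1 lam * ((n:ℝ) + 1 - (k:ℝ))
          = ((n:ℝ)+1) * ((k:ℝ)+1) * esym (k+1) lam := by
        rw [heq]
        field_simp
      -- multiply by B and use hrel, cancel (n+1-k)
      have h4 : ((n:ℝ) + 1 - (k:ℝ)) * (esym (k+1) lam * (((n+1).choose k : ℝ) * ((n:ℝ)+1)))
          = ((n:ℝ) + 1 - (k:ℝ)) * (esym k lam * esym 1 lam * (((n+1).choose (k+1) : ℝ))) := by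
        linear_combination ((n:ℝ)+1) * esym (k+1) lam * hrel.symm
          + (((n+1).choose (k+1) : ℝ)) * hcross.symm
      exact mul_left_cancel₀ hmk.ne' h4
    have hall := strict_P_eq (m := n+1) hk (by omega) lam hpos hPeq
    exact ⟨lam ⟨0, by omega⟩, fun i => hall i ⟨0, by omega⟩⟩
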